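/- Approximate entropy inequality error bound for the scheme: summing the discrete entropy inequalities against cell averages of a nonnegative test function φ, the resulting inequality differs from the exact entropy inequality by at most c₁(Δt + Δx), where c₁ depends only on R, T, the flux Lipschitz constant L, and norms of φ; in particular the term A = ∑_{n,j}|ρ_{j+1/2}^n − k|(φ_{j+1/2}^n − φ_{j+1/2}^{n−1})Δx satisfies |A − ∫_τ^{τ'}∫_ℝ |ρ_Δ−k| ∂ₜφ dx dt| ≤ R(T‖∂²_{tt}φ‖_{L∞_t L¹_x} + 2‖∂ₜφ‖_{L∞_t L¹_x})Δt. -/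

import Mathlib

open MeasureTheory Set Filter Topology

lemma aux_finite_restrict (a b : ℝ) : IsFiniteMeasure (volume.restrict (Ioc a b)) :=
  ⟨by rw [Measure.restrict_apply_univ]; exact measure_Ioc_lt_top⟩

lemma aux_ii_of_bdd {u : ℝ → ℝ} (hm : AEStronglyMeasurable u volume) {C : ℝ}
    (hb : ∀ t, |u t| ≤ C) (a b : ℝ) : IntervalIntegrable u volume a b := by
  constructor <;>
  · haveI := aux_finite_restrict a b
    haveI := aux_finite_restrict b a
    exact ⟨hm.restrict, HasFiniteIntegral.of_bounded (C := C)
      (Eventually.of_forall fun t => by simpa using hb t)⟩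

lemma aux_integrable_of_bdd_supp {u : ℝ → ℝ} (hm : AEStronglyMeasurable u volume) {C M : ℝ}
    (hb : ∀ x, |u x| ≤ C) (hs : ∀ x, M ≤ |x| → u x = 0) : Integrable u volume := by
  have hsupp : Function.support u ⊆ Icc (-M) M := by
    intro x hx
    by_contra hxM
    apply hx
    apply hs
    rcases not_and_or.1 (fun h => hxM ⟨h.1, h.2⟩ : ¬ (-M ≤ x ∧ x ≤ M)) with h | h
    · linarith [not_le.1 h, neg_abs_le x]
    · linarith [not_le.1 h, le_abs_self x]
  rw [← integrableOn_iff_integrable_of_support_subset hsupp]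
  haveI : IsFiniteMeasure (volume.restrict (Icc (-M) M)) :=
    ⟨by rw [Measure.restrict_apply_univ]; exact measure_Icc_lt_top⟩
  exact ⟨hm.restrict, HasFiniteIntegral.of_bounded (C := C)
    (Eventually.of_forall fun t => by simpa using hb t)⟩

noncomputable def aDt (f : ℝ × ℝ → ℝ) : ℝ × ℝ → ℝ := fun q => fderiv ℝ f q (0, 1)

lemma aDt_contDiff {f : ℝ × ℝ → ℝ} (hf : ContDiff ℝ (⊤ : ℕ∞) f) :
    ContDiff ℝ (⊤ : ℕ∞) (aDt f) := by
  have h1 : ContDiff ℝ (⊤ : ℕ∞) (fderiv ℝ f) := by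
    have := hf.fderiv_right (m := (⊤ : ℕ∞)) (by exact_mod_cast le_rfl)
    exact this
  exact h1.clm_apply contDiff_const

lemma aDt_hasDerivAt {f : ℝ × ℝ → ℝ} (hf : ContDiff ℝ (⊤ : ℕ∞) f) (x t : ℝ) :
    HasDerivAt (fun s => f (x, s)) (aDt f (x, t)) t := by
  have hF : HasFDerivAt f (fderiv ℝ f (x, t)) (x, t) :=
    (hf.differentiable (by simp) (x, t)).hasFDerivAt
  have hg : HasDerivAt (fun s : ℝ => ((x : ℝ), s)) ((0 : ℝ), (1 : ℝ)) t :=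
    (hasDerivAt_const t x).prodMk (hasDerivAt_id t)
  exact hF.comp_hasDerivAt t hg

lemma aDt_deriv {f : ℝ × ℝ → ℝ} (hf : ContDiff ℝ (⊤ : ℕ∞) f) (x t : ℝ) :
    deriv (fun s => f (x, s)) t = aDt f (x, t) :=
  (aDt_hasDerivAt hf x t).deriv

lemma aDt_supp {f : ℝ × ℝ → ℝ} (hf : HasCompactSupport f) : HasCompactSupport (aDt f) := by
  apply (hf.fderiv ℝ).mono
  intro q hq
  simp only [Function.mem_support, aDt] at hq ⊢
  intro h0
  exact hq (by rw [h0]; rfl)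

lemma aux_supp_bd {f : ℝ × ℝ → ℝ} (hs : HasCompactSupport f) :
    ∃ M : ℝ, 0 < M ∧ ∀ x t : ℝ, M ≤ |x| → f (x, t) = 0 := by
  obtain ⟨r, hr⟩ := hs.isCompact.isBounded.subset_closedBall 0
  refine ⟨|r| + 1, by positivity, fun x t hx => ?_⟩
  by_contra h0
  have hmem : (x, t) ∈ Metric.closedBall (0 : ℝ × ℝ) r :=
    hr (subset_tsupport f (by simpa [Function.mem_support] using h0))
  rw [Metric.mem_closedBall, dist_zero_right, Prod.norm_def] at hmem
  have : |x| ≤ r := le_trans (le_max_left _ _) hmem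
  have := le_abs_self r
  linarith

lemma aux_iUnion_cells {d : ℝ} (hd : 0 < d) :
    (⋃ j : ℤ, Ioc ((j : ℝ) * d) (((j : ℝ) + 1) * d)) = univ := by
  ext x
  simp only [mem_iUnion, mem_Ioc, mem_univ, iff_true]
  refine ⟨⌈x / d⌉ - 1, ?_, ?_⟩
  · push_cast
    have h1 : (⌈x / d⌉ : ℝ) < x / d + 1 := Int.ceil_lt_add_one (x / d)
    have h2 : (⌈x / d⌉ : ℝ) - 1 < x / d := by linarith
    calc ((⌈x / d⌉ : ℝ) - 1) * d < (x / d) * d := by nlinarith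
    _ = x := by field_simp
  · push_cast
    have := Int.le_ceil (x / d)
    have : x / d * d ≤ (⌈x / d⌉ : ℝ) * d := by nlinarith
    calc x = x / d * d := by field_simp
    _ ≤ (⌈x / d⌉ : ℝ) * d := this
    _ ≤ ((⌈x / d⌉ : ℝ) - 1 + 1) * d := by ring_nf; exact le_rfl


lemma aux_taylor {f : ℝ × ℝ → ℝ} (hf : ContDiff ℝ (⊤ : ℕ∞) f) {Δt : ℝ} (hΔt : 0 < Δt)
    (x t : ℝ) :
    |(f (x, t) - f (x, t - Δt)) / Δt - aDt f (x, t)|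
      ≤ ∫ u in (t - Δt)..t, |aDt (aDt f) (x, u)| := by
  set f1 := aDt f
  set f2 := aDt f1
  have hf1 : ContDiff ℝ (⊤ : ℕ∞) f1 := aDt_contDiff hf
  have hc1x : Continuous (fun s : ℝ => f1 (x, s)) :=
    hf1.continuous.comp (continuous_const.prodMk continuous_id)
  have hc2x : Continuous (fun s : ℝ => f2 (x, s)) :=
    (aDt_contDiff hf1).continuous.comp (continuous_const.prodMk continuous_id)
  have hab : t - Δt ≤ t := by linarith
  -- FTC for f
  have hftc : ∫ s in (t - Δt)..t, f1 (x, s) = f (x, t) - f (x, t - Δt) :=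
    intervalIntegral.integral_eq_sub_of_hasDerivAt
      (fun s _ => aDt_hasDerivAt hf x s) (hc1x.intervalIntegrable _ _)
  -- difference of derivatives
  have hdd : ∀ s, f1 (x, t) - f1 (x, s) = ∫ u in s..t, f2 (x, u) := fun s =>
    (intervalIntegral.integral_eq_sub_of_hasDerivAt
      (fun u _ => aDt_hasDerivAt hf1 x u) (hc2x.intervalIntegrable _ _)).symm
  set D := ∫ u in (t - Δt)..t, |f2 (x, u)| with hD
  have hD0 : 0 ≤ D := by
    rw [hD, intervalIntegral.integral_of_le hab]
    positivity
  have key : |f (x, t) - f (x, t - Δt) - Δt * f1 (x, t)| ≤ D * Δt := by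
    have h1 : f (x, t) - f (x, t - Δt) - Δt * f1 (x, t)
        = ∫ s in (t - Δt)..t, ((fun s => f1 (x, s)) s - f1 (x, t)) := by
      rw [intervalIntegral.integral_sub (hc1x.intervalIntegrable _ _)
        intervalIntegrable_const, hftc, intervalIntegral.integral_const]
      simp only [smul_eq_mul]
      ring
    rw [h1]
    have h2 : ∀ s ∈ Set.uIoc (t - Δt) t, ‖(fun s => f1 (x, s)) s - f1 (x, t)‖ ≤ D := by
      intro s hs
      rw [uIoc_of_le hab] at hs
      have hst : s ≤ t := hs.2
      have hts : t - Δt ≤ s := le_of_lt hs.1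
      have habs : ‖(fun s => f1 (x, s)) s - f1 (x, t)‖ = |∫ u in s..t, f2 (x, u)| := by
        simp only [Real.norm_eq_abs]
        rw [abs_sub_comm, hdd s]
      rw [habs]
      calc |∫ u in s..t, f2 (x, u)| ≤ ∫ u in s..t, |f2 (x, u)| := by
            simpa using intervalIntegral.norm_integral_le_integral_norm
              (f := fun u => f2 (x, u)) (μ := volume) hst
        _ ≤ D := by
            rw [hD]
            apply intervalIntegral.integral_mono_interval hts hst le_rfl
            · exact Eventually.of_forall fun u => abs_nonneg _
            · exact hc2x.abs.intervalIntegrable _ _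
    have := intervalIntegral.norm_integral_le_of_norm_le_const h2
    rw [Real.norm_eq_abs] at this
    calc |∫ s in (t - Δt)..t, ((fun s => f1 (x, s)) s - f1 (x, t))| ≤ D * |t - (t - Δt)| := this
      _ = D * Δt := by rw [abs_of_pos (by linarith : (0:ℝ) < t - (t - Δt))]; ring
  rw [show (f (x, t) - f (x, t - Δt)) / Δt - f1 (x, t)
      = (f (x, t) - f (x, t - Δt) - Δt * f1 (x, t)) / Δt by field_simp]
  rw [abs_div, abs_of_pos hΔt, div_le_iff₀ hΔt]
  exact key

lemma aux_fubini_bound {f2 : ℝ × ℝ → ℝ} (hc : Continuous f2) (hs : HasCompactSupport f2)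
    {N : ℝ} (hN : ∀ u, (∫ x, |f2 (x, u)|) ≤ N) {a b : ℝ} (hab : a ≤ b) :
    (∫ x, (∫ u in Ioc a b, |f2 (x, u)|)) ≤ (b - a) * N := by
  have hN0 : 0 ≤ N := le_trans (by positivity) (hN 0)
  have habs : HasCompactSupport (fun q : ℝ × ℝ => |f2 q|) :=
    hs.mono (by intro q; simp [Function.mem_support])
  have h0 : Integrable (fun q : ℝ × ℝ => |f2 q|) volume :=
    hc.abs.integrable_of_hasCompactSupport habs
  rw [Measure.volume_eq_prod] at h0
  have hint : Integrable (fun q : ℝ × ℝ => |f2 q|)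
      ((volume : Measure ℝ).prod ((volume : Measure ℝ).restrict (Ioc a b))) := by
    have := h0.restrict (s := univ ×ˢ Ioc a b)
    rwa [← Measure.prod_restrict, Measure.restrict_univ] at this
  have swap : (∫ x, (∫ u in Ioc a b, |f2 (x, u)|))
      = ∫ u in Ioc a b, (∫ x, |f2 (x, u)|) :=
    integral_integral_swap (f := fun x u => |f2 (x, u)|) hint
  rw [swap]
  have hmeas : StronglyMeasurable (fun u => ∫ x, |f2 (x, u)|) := by
    have : StronglyMeasurable (fun q : ℝ × ℝ => |f2 (q.2, q.1)|) :=
      (hc.comp continuous_swap).abs.stronglyMeasurable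
    exact this.integral_prod_right'
  have hbd : ∀ u, abs (∫ x, |f2 (x, u)|) ≤ N := fun u => by
    rw [abs_of_nonneg (by positivity)]; exact hN u
  have hIOn : IntegrableOn (fun u => ∫ x, |f2 (x, u)|) (Ioc a b) volume := by
    haveI := aux_finite_restrict a b
    exact ⟨hmeas.aestronglyMeasurable.restrict, HasFiniteIntegral.of_bounded (C := N)
      (Eventually.of_forall fun u => by simpa using hbd u)⟩
  calc (∫ u in Ioc a b, (∫ x, |f2 (x, u)|)) ≤ ∫ u in Ioc a b, N :=
        setIntegral_mono_on hIOn (integrableOn_const measure_Ioc_lt_top.ne)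
          measurableSet_Ioc (fun u _ => hN u)
    _ = (b - a) * N := by
        rw [setIntegral_const, measureReal_def, Real.volume_Ioc, smul_eq_mul, ENNReal.toReal_ofReal (by linarith)]

lemma aux_param_ii {Φ : ℝ × ℝ → ℝ} (hm : StronglyMeasurable Φ) {C : ℝ}
    (hb : ∀ q, |Φ q| ≤ C) {S : Set ℝ} (hS : volume S ≠ ⊤) (a b : ℝ) :
    IntervalIntegrable (fun t => ∫ x in S, Φ (t, x)) volume a b := by
  have hmeas : StronglyMeasurable (fun t => ∫ x in S, Φ (t, x)) :=
    hm.integral_prod_right' (ν := volume.restrict S)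
  have hbd : ∀ t, |∫ x in S, Φ (t, x)| ≤ C * (volume S).toReal := fun t => by
    have := norm_setIntegral_le_of_norm_le_const (μ := volume) (s := S)
      (f := fun x => Φ (t, x)) (lt_top_iff_ne_top.2 hS) (fun x _ => by simpa using hb (t, x))
    rw [measureReal_def] at this
    simpa using this
  exact aux_ii_of_bdd hmeas.aestronglyMeasurable hbd a b

lemma aux_abs_integral_le {u : ℝ → ℝ} (hm : AEStronglyMeasurable u volume) {C M : ℝ}
    (hb : ∀ x, |u x| ≤ C) (hs : ∀ x, M ≤ |x| → u x = 0) (hM : 0 < M) :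
    |∫ x, u x| ≤ C * (2 * M) := by
  have h1 : ∫ x, u x = ∫ x in Icc (-M) M, u x := by
    rw [setIntegral_eq_integral_of_forall_compl_eq_zero]
    intro x hx
    apply hs
    simp only [mem_Icc, not_and_or, not_le] at hx
    rcases hx with h | h
    · linarith [neg_abs_le x]
    · linarith [le_abs_self x]
  rw [h1]
  have := norm_setIntegral_le_of_norm_le_const (μ := volume) (s := Icc (-M) M) (f := u)
    measure_Icc_lt_top (fun x _ => by simpa using hb x)
  simp only [Real.norm_eq_abs, measureReal_def, Real.volume_Icc] at this
  calc |∫ x in Icc (-M) M, u x| ≤ C * (ENNReal.ofReal (M - -M)).toReal := this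
    _ = C * (2 * M) := by rw [ENNReal.toReal_ofReal (by linarith)]; ring_nf

lemma aux_cells_disjoint {d : ℝ} (hd : 0 < d) :
    Pairwise (Function.onFun Disjoint fun j : ℤ => Ioc ((j : ℝ) * d) (((j : ℝ) + 1) * d)) := by
  intro i j hij
  have key : ∀ a b : ℤ, a < b →
      Disjoint (Ioc ((a : ℝ) * d) (((a : ℝ) + 1) * d)) (Ioc ((b : ℝ) * d) (((b : ℝ) + 1) * d)) := by
    intro a b hab
    apply Set.Ioc_disjoint_Ioc.2
    have : (a : ℝ) + 1 ≤ (b : ℝ) := by exact_mod_cast Int.add_one_le_of_lt hab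
    have h1 : ((a : ℝ) + 1) * d ≤ (b : ℝ) * d := by nlinarith
    calc min (((a:ℝ)+1)*d) (((b:ℝ)+1)*d) ≤ ((a:ℝ)+1)*d := min_le_left _ _
      _ ≤ max ((a:ℝ)*d) ((b:ℝ)*d) := le_trans h1 (le_max_right _ _)
  rcases lt_or_gt_of_ne hij with h | h
  · exact key i j h
  · exact (key j i h).symm

set_option maxHeartbeats 2000000 in
/-- Quadrature estimate for the term `A` in the approximate entropy inequality
(Section 3): with `φ_{j+1/2}^n` the cell averages of a nonnegative test function `φ` and
`ρ_Δ` the piecewise constant grid function with values in `[0,R]`,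
`A = ∑_{n=p+1}^{m−1} ∑_j |ρ_{j+1/2}^n − k|(φ_{j+1/2}^n − φ_{j+1/2}^{n−1})Δx` satisfies
`|A − ∫_τ^{τ'}∫_ℝ |ρ_Δ − k| ∂ₜφ dx dt| ≤ R(T‖∂²_{tt}φ‖_{L∞_t L¹_x} +
2‖∂ₜφ‖_{L∞_t L¹_x})Δt`; this is the error of size `c₁(Δt + Δx)` coming from summing the
discrete entropy inequalities against the cell averages of `φ`. -/
theorem stmt_18
    (T R Δx Δt k τ τ' N1 N2 : ℝ)
    (hT : 0 < T) (hR : 0 < R) (hΔx : 0 < Δx) (hΔt : 0 < Δt)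
    (hk : k ∈ Icc (0:ℝ) R)
    (p m : ℕ) (hpm : p ≤ m)
    (hτ : τ ∈ Ico ((p : ℝ) * Δt) (((p : ℝ) + 1) * Δt))
    (hτ' : τ' ∈ Ico ((m : ℝ) * Δt) (((m : ℝ) + 1) * Δt))
    (hττ' : τ ≤ τ') (hτ'T : τ' ≤ T)
    (ρ : ℕ → ℤ → ℝ) (hρbd : ∀ n j, ρ n j ∈ Icc 0 R)
    (ρΔ : ℝ → ℝ → ℝ)
    (hρΔ : ∀ x t, ρΔ x t = ρ (⌊t/Δt⌋.toNat) ⌊x/Δx⌋)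
    (φ : ℝ → ℝ → ℝ)
    (hφ : ContDiff ℝ (⊤ : ℕ∞) (Function.uncurry φ))
    (hφsupp : HasCompactSupport (Function.uncurry φ))
    (hφpos : ∀ x t, 0 ≤ φ x t)
    (hN1 : ∀ t : ℝ, (∫ x, |deriv (φ x) t|) ≤ N1)
    (hN2 : ∀ t : ℝ, (∫ x, |deriv (deriv (φ x)) t|) ≤ N2)
    (φavg : ℕ → ℤ → ℝ)
    (hφavg : ∀ (n : ℕ) (j : ℤ),
      φavg n j = (1/(Δx*Δt)) *
        ∫ t in ((n : ℝ) * Δt)..(((n : ℝ) + 1) * Δt),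
          ∫ x in ((j : ℝ) * Δx)..(((j : ℝ) + 1) * Δx), φ x t) :
    |(∑ n ∈ Finset.Icc (p+1) (m-1), ∑' j : ℤ,
        |ρ n j - k| * (φavg n j - φavg (n-1) j) * Δx)
      - ∫ t in τ..τ', ∫ x, |ρΔ x t - k| * deriv (φ x) t|
    ≤ R * (T * N2 + 2 * N1) * Δt := by
  obtain ⟨hk0, hkR⟩ := hk
  obtain ⟨hτ1, hτ2⟩ := hτ
  obtain ⟨hτ'1, hτ'2⟩ := hτ'
  have hN10 : 0 ≤ N1 := le_trans (by positivity) (hN1 0)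
  have hN20 : 0 ≤ N2 := le_trans (by positivity) (hN2 0)
  -- derivative machinery
  have hψc : Continuous (Function.uncurry φ) := hφ.continuous
  have hΨ1cd : ContDiff ℝ (⊤:ℕ∞) (aDt (Function.uncurry φ)) := aDt_contDiff hφ
  set Ψ1 : ℝ × ℝ → ℝ := aDt (Function.uncurry φ) with hΨ1def
  set Ψ2 : ℝ × ℝ → ℝ := aDt Ψ1 with hΨ2def
  have hΨ1c : Continuous Ψ1 := hΨ1cd.continuous
  have hΨ2c : Continuous Ψ2 := (aDt_contDiff hΨ1cd).continuous
  have hΨ1s : HasCompactSupport Ψ1 := aDt_supp hφsupp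
  have hΨ2s : HasCompactSupport Ψ2 := aDt_supp hΨ1s
  have hd1 : ∀ x t, deriv (φ x) t = Ψ1 (x, t) := fun x t => aDt_deriv hφ x t
  have hd2 : ∀ x u, deriv (deriv (φ x)) u = Ψ2 (x, u) := by
    intro x u
    have hre : deriv (φ x) = fun s => Ψ1 (x, s) := funext fun s => hd1 x s
    rw [hre]
    exact aDt_deriv hΨ1cd x u
  have hN1Ψ : ∀ t, (∫ x, |Ψ1 (x, t)|) ≤ N1 := fun t => by
    simpa only [hd1] using hN1 t
  have hN2Ψ : ∀ u, (∫ x, |Ψ2 (x, u)|) ≤ N2 := fun u => by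
    simpa only [hd2] using hN2 u
  -- uniform bounds and support radii
  obtain ⟨C0, hC0⟩ := hψc.bounded_above_of_compact_support hφsupp
  obtain ⟨C1, hC1⟩ := hΨ1c.bounded_above_of_compact_support hΨ1s
  obtain ⟨C2, hC2⟩ := hΨ2c.bounded_above_of_compact_support hΨ2s
  obtain ⟨M0, hM0pos, hM0⟩ := aux_supp_bd hφsupp
  obtain ⟨M1, hM1pos, hM1⟩ := aux_supp_bd hΨ1s
  obtain ⟨M2, hM2pos, hM2⟩ := aux_supp_bd hΨ2s
  set M : ℝ := max M0 (max M1 M2) with hMdef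
  have hMpos : 0 < M := lt_of_lt_of_le hM0pos (le_max_left _ _)
  have hM0' : ∀ x t, M ≤ |x| → Function.uncurry φ (x, t) = 0 := fun x t hx =>
    hM0 x t (le_trans (le_max_left _ _) hx)
  have hM1' : ∀ x t, M ≤ |x| → Ψ1 (x, t) = 0 := fun x t hx =>
    hM1 x t (le_trans (le_trans (le_max_left _ _) (le_max_right _ _)) hx)
  have hM2' : ∀ x t, M ≤ |x| → Ψ2 (x, t) = 0 := fun x t hx =>
    hM2 x t (le_trans (le_trans (le_max_right _ _) (le_max_right _ _)) hx)
  -- grid functions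
  set F : ℝ → ℝ → ℝ := fun x t => |ρΔ x t - k| with hFdef
  have hFbd : ∀ x t, |F x t| ≤ R := by
    intro x t
    rw [hFdef]
    dsimp only
    rw [abs_abs, hρΔ]
    obtain ⟨ha1, ha2⟩ := hρbd (⌊t/Δt⌋.toNat) ⌊x/Δx⌋
    rw [abs_le]
    constructor <;> linarith
  have hFmeas : Measurable (fun q : ℝ × ℝ => F q.1 q.2) := by
    have h1 : Measurable (fun q : ℝ × ℝ => ((⌊q.2/Δt⌋.toNat, ⌊q.1/Δx⌋) : ℕ × ℤ)) := by
      apply Measurable.prodMk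
      · exact (measurable_of_countable Int.toNat).comp
          (Int.measurable_floor.comp (measurable_snd.div_const Δt))
      · exact Int.measurable_floor.comp (measurable_fst.div_const Δx)
    have h2 : Measurable (fun pr : ℕ × ℤ => |ρ pr.1 pr.2 - k|) := measurable_of_countable _
    have h3 := h2.comp h1
    have he : (fun q : ℝ × ℝ => F q.1 q.2)
        = fun q : ℝ × ℝ => |ρ (⌊q.2/Δt⌋.toNat) ⌊q.1/Δx⌋ - k| := by
      funext q
      rw [hFdef]
      dsimp only
      rw [hρΔ]
    rw [he]
    exact h3
  set g : ℝ → ℝ → ℝ :=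
    fun x t => (Function.uncurry φ (x, t) - Function.uncurry φ (x, t - Δt)) / Δt with hgdef
  have hgc : Continuous (fun q : ℝ × ℝ => g q.1 q.2) := by
    rw [hgdef]
    exact ((hψc.comp (continuous_fst.prodMk continuous_snd)).sub
      (hψc.comp (continuous_fst.prodMk (continuous_snd.sub continuous_const)))).div_const Δt
  have hgbd : ∀ x t, |g x t| ≤ (C0 + C0) / Δt := by
    intro x t
    rw [hgdef]
    dsimp only
    rw [abs_div, abs_of_pos hΔt]
    gcongr
    calc |Function.uncurry φ (x, t) - Function.uncurry φ (x, t - Δt)|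
        ≤ |Function.uncurry φ (x, t)| + |Function.uncurry φ (x, t - Δt)| := abs_sub _ _
      _ ≤ C0 + C0 := add_le_add (by simpa using hC0 (x, t)) (by simpa using hC0 (x, t - Δt))
  have hg0 : ∀ x t, M ≤ |x| → g x t = 0 := by
    intro x t hx
    rw [hgdef]
    dsimp only
    rw [hM0' x t hx, hM0' x (t - Δt) hx]
    simp
  set W : ℝ → ℝ → ℝ := fun x t => F x t * g x t with hWdef
  set V : ℝ → ℝ → ℝ := fun x t => F x t * Ψ1 (x, t) with hVdef
  have hWmeas : Measurable (fun q : ℝ × ℝ => W q.1 q.2) := by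
    rw [hWdef]; exact hFmeas.mul hgc.measurable
  have hVmeas : Measurable (fun q : ℝ × ℝ => V q.1 q.2) := by
    rw [hVdef]
    exact hFmeas.mul ((hΨ1c.comp (continuous_fst.prodMk continuous_snd)).measurable)
  have hWbd : ∀ x t, |W x t| ≤ R * ((C0 + C0) / Δt) := by
    intro x t
    rw [hWdef]
    dsimp only
    rw [abs_mul]
    exact mul_le_mul (hFbd x t) (hgbd x t) (abs_nonneg _) hR.le
  have hVbd : ∀ x t, |V x t| ≤ R * C1 := by
    intro x t
    rw [hVdef]
    dsimp only
    rw [abs_mul]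
    exact mul_le_mul (hFbd x t) (by simpa using hC1 (x, t)) (abs_nonneg _) hR.le
  have hW0 : ∀ x t, M ≤ |x| → W x t = 0 := by
    intro x t hx
    rw [hWdef]
    dsimp only
    rw [hg0 x t hx, mul_zero]
  have hV0 : ∀ x t, M ≤ |x| → V x t = 0 := by
    intro x t hx
    rw [hVdef]
    dsimp only
    rw [hM1' x t hx, mul_zero]
  have hWint : ∀ t, Integrable (fun x => W x t) volume := fun t =>
    aux_integrable_of_bdd_supp
      ((hWmeas.comp (measurable_id.prodMk measurable_const)).aestronglyMeasurable)
      (fun x => hWbd x t) (fun x hx => hW0 x t hx)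
  have hVint : ∀ t, Integrable (fun x => V x t) volume := fun t =>
    aux_integrable_of_bdd_supp
      ((hVmeas.comp (measurable_id.prodMk measurable_const)).aestronglyMeasurable)
      (fun x => hVbd x t) (fun x hx => hV0 x t hx)
  set Hf : ℝ → ℝ := fun t => ∫ x, W x t with hHfdef
  set hf : ℝ → ℝ := fun t => ∫ x, V x t with hhfdef
  have hHfmeas : StronglyMeasurable Hf := by
    rw [hHfdef]
    exact ((hWmeas.comp measurable_swap).stronglyMeasurable).integral_prod_right'
  have hhfmeas : StronglyMeasurable hf := by
    rw [hhfdef]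
    exact ((hVmeas.comp measurable_swap).stronglyMeasurable).integral_prod_right'
  have hhfbd : ∀ t, |hf t| ≤ R * N1 := by
    intro t
    rw [hhfdef]
    dsimp only
    have hint1 : Integrable (fun x => R * |Ψ1 (x, t)|) volume :=
      (aux_integrable_of_bdd_supp
        ((hΨ1c.comp (continuous_id.prodMk continuous_const)).abs.aestronglyMeasurable)
        (C := C1) (M := M)
        (fun x => by simpa [abs_abs] using hC1 (x, t))
        (fun x hx => by simp [hM1' x t hx])).const_mul R
    have hptw1 : ∀ x, ‖V x t‖ ≤ R * |Ψ1 (x, t)| := by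
      intro x
      rw [Real.norm_eq_abs, hVdef]
      dsimp only
      rw [abs_mul]
      exact mul_le_mul_of_nonneg_right (hFbd x t) (abs_nonneg _)
    calc |∫ x, V x t| ≤ ∫ x, R * |Ψ1 (x, t)| := by
          have hb := norm_integral_le_of_norm_le hint1 (Eventually.of_forall hptw1)
          simpa using hb
      _ = R * ∫ x, |Ψ1 (x, t)| := integral_const_mul R _
      _ ≤ R * N1 := mul_le_mul_of_nonneg_left (hN1Ψ t) hR.le
  have hhfII : ∀ a b : ℝ, IntervalIntegrable hf volume a b := fun a b =>
    aux_ii_of_bdd hhfmeas.aestronglyMeasurable hhfbd a b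
  have hHfbd : ∀ t, |Hf t| ≤ (R * ((C0 + C0) / Δt)) * (2 * M) := by
    intro t
    rw [hHfdef]
    dsimp only
    exact aux_abs_integral_le
      ((hWmeas.comp (measurable_id.prodMk measurable_const)).aestronglyMeasurable)
      (fun x => hWbd x t) (fun x hx => hW0 x t hx) hMpos
  have hHfII : ∀ a b : ℝ, IntervalIntegrable Hf volume a b := fun a b =>
    aux_ii_of_bdd hHfmeas.aestronglyMeasurable hHfbd a b
  -- quadrature error bound in time
  have hHh : ∀ t, |Hf t - hf t| ≤ R * (Δt * N2) := by
    intro t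
    have hab : t - Δt ≤ t := by linarith
    have hsub : Hf t - hf t = ∫ x, (W x t - V x t) := by
      rw [hHfdef, hhfdef]
      exact (integral_sub (hWint t) (hVint t)).symm
    set dom : ℝ → ℝ := fun x => ∫ u in Ioc (t - Δt) t, |Ψ2 (x, u)| with hdomdef
    have hdommeas : StronglyMeasurable dom := by
      rw [hdomdef]
      exact (hΨ2c.abs.stronglyMeasurable).integral_prod_right'
    have hdombd : ∀ x, |dom x| ≤ C2 * Δt := by
      intro x
      rw [hdomdef]
      dsimp only
      have hb := norm_setIntegral_le_of_norm_le_const (μ := volume) (s := Ioc (t - Δt) t)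
        (f := fun u => |Ψ2 (x, u)|) measure_Ioc_lt_top
        (fun u _ => by simpa [abs_abs] using hC2 (x, u))
      rw [Real.norm_eq_abs, measureReal_def, Real.volume_Ioc] at hb
      calc abs (∫ u in Ioc (t - Δt) t, |Ψ2 (x, u)|)
          ≤ C2 * (ENNReal.ofReal (t - (t - Δt))).toReal := hb
        _ = C2 * Δt := by rw [ENNReal.toReal_ofReal (by linarith)]; ring_nf
    have hdom0 : ∀ x, M ≤ |x| → dom x = 0 := by
      intro x hx
      rw [hdomdef]
      dsimp only
      have hz : ∀ u : ℝ, |Ψ2 (x, u)| = 0 := fun u => by rw [hM2' x u hx]; simp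
      simp [hz]
    have hdomint : Integrable dom volume :=
      aux_integrable_of_bdd_supp hdommeas.aestronglyMeasurable hdombd hdom0
    have hptw : ∀ x, ‖W x t - V x t‖ ≤ R * dom x := by
      intro x
      rw [Real.norm_eq_abs, hWdef, hVdef]
      dsimp only
      rw [← mul_sub, abs_mul]
      have htay := aux_taylor hφ hΔt x t
      have h2 : |g x t - Ψ1 (x, t)| ≤ dom x := by
        rw [hgdef, hdomdef]
        dsimp only
        rw [← intervalIntegral.integral_of_le hab]
        exact htay
      exact mul_le_mul (hFbd x t) h2 (abs_nonneg _) hR.le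
    have hbound : |∫ x, (W x t - V x t)| ≤ R * (∫ x, dom x) := by
      have hb := norm_integral_le_of_norm_le (hdomint.const_mul R) (Eventually.of_forall hptw)
      rw [Real.norm_eq_abs] at hb
      rwa [integral_const_mul] at hb
    have hfub : (∫ x, dom x) ≤ Δt * N2 := by
      have hb := aux_fubini_bound hΨ2c hΨ2s hN2Ψ hab
      have he : t - (t - Δt) = Δt := by ring
      rw [he] at hb
      rw [hdomdef]
      exact hb
    calc |Hf t - hf t| = |∫ x, (W x t - V x t)| := by rw [hsub]
      _ ≤ R * (∫ x, dom x) := hbound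
      _ ≤ R * (Δt * N2) := mul_le_mul_of_nonneg_left hfub hR.le
  -- slab machinery
  have hsmW : StronglyMeasurable (fun q : ℝ × ℝ => W q.2 q.1) :=
    (hWmeas.comp measurable_swap).stronglyMeasurable
  have hXfin : ∀ j : ℤ, volume (Ioc ((j:ℝ)*Δx) (((j:ℝ)+1)*Δx)) ≠ ⊤ := fun j =>
    measure_Ioc_lt_top.ne
  have hWII : ∀ (j : ℤ) (a b : ℝ),
      IntervalIntegrable (fun t => ∫ x in Ioc ((j:ℝ)*Δx) (((j:ℝ)+1)*Δx), W x t) volume a b :=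
    fun j a b => aux_param_ii hsmW (fun q => hWbd q.2 q.1) (hXfin j) a b
  set j0 : ℤ := ⌈M / Δx⌉ + 1 with hj0def
  have hceil : M ≤ (⌈M/Δx⌉ : ℝ) * Δx := by
    have h1 := Int.le_ceil (M/Δx)
    have h2 := mul_le_mul_of_nonneg_right h1 hΔx.le
    rwa [div_mul_cancel₀ M hΔx.ne'] at h2
  have hcellW0 : ∀ j : ℤ, j ∉ Finset.Icc (-j0) j0 →
      ∀ t x, x ∈ Ioc ((j:ℝ)*Δx) (((j:ℝ)+1)*Δx) → W x t = 0 := by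
    intro j hj t x hx
    apply hW0 x t
    simp only [Finset.mem_Icc, not_and_or, not_le] at hj
    rcases hj with h | h
    · have hj' : (j:ℝ) + 1 ≤ -(⌈M/Δx⌉:ℝ) := by
        have hle : j + 1 ≤ -(⌈M/Δx⌉) := by omega
        exact_mod_cast hle
      have hx2 : x ≤ -M := by
        have h3 : ((j:ℝ)+1)*Δx ≤ -(⌈M/Δx⌉:ℝ)*Δx := by nlinarith
        nlinarith [hx.2]
      linarith [neg_abs_le x]
    · have hj' : (⌈M/Δx⌉:ℝ) ≤ (j:ℝ) := by
        have hle : (⌈M/Δx⌉) ≤ j := by omega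
        exact_mod_cast hle
      have hx2 : M ≤ x := by nlinarith [hx.1]
      linarith [le_abs_self x]
  have hsumW : ∀ t, (∑ j ∈ Finset.Icc (-j0) j0,
      ∫ x in Ioc ((j:ℝ)*Δx) (((j:ℝ)+1)*Δx), W x t) = Hf t := by
    intro t
    have hIu : IntegrableOn (fun x => W x t)
        (⋃ j : ℤ, Ioc ((j:ℝ)*Δx) (((j:ℝ)+1)*Δx)) volume := by
      rw [aux_iUnion_cells hΔx]
      exact integrableOn_univ.2 (hWint t)
    have hiu := integral_iUnion (fun j : ℤ => measurableSet_Ioc) (aux_cells_disjoint hΔx) hIu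
    have h0 : Hf t = ∑' j : ℤ, ∫ x in Ioc ((j:ℝ)*Δx) (((j:ℝ)+1)*Δx), W x t := by
      rw [hHfdef]
      dsimp only
      rw [show (∫ x, W x t) = ∫ x in (⋃ j : ℤ, Ioc ((j:ℝ)*Δx) (((j:ℝ)+1)*Δx)), W x t by
        rw [aux_iUnion_cells hΔx, Measure.restrict_univ]]
      exact hiu
    rw [h0]
    exact (tsum_eq_sum (fun j hj => by
      rw [setIntegral_congr_fun (g := fun _ => (0:ℝ)) measurableSet_Ioc
        (fun x hx => hcellW0 j hj t x hx)]
      simp)).symm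
  -- the per-slab identity
  have hSn : ∀ n ∈ Finset.Icc (p+1) (m-1),
      (∑' j : ℤ, |ρ n j - k| * (φavg n j - φavg (n-1) j) * Δx)
      = ∫ t in ((n:ℝ) * Δt)..(((n:ℝ) + 1) * Δt), Hf t := by
    intro n hn
    obtain ⟨hn1, hn2⟩ := Finset.mem_Icc.1 hn
    have hnpos : 1 ≤ n := by omega
    have hcast : ((n - 1 : ℕ) : ℝ) = (n : ℝ) - 1 := by
      rw [Nat.cast_sub hnpos, Nat.cast_one]
    have haleb : (n:ℝ) * Δt ≤ ((n:ℝ)+1) * Δt := by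
      have : ((n:ℝ)+1) * Δt = (n:ℝ)*Δt + Δt := by ring
      linarith
    have hterm : ∀ j : ℤ, |ρ n j - k| * (φavg n j - φavg (n-1) j) * Δx
        = ∫ t in ((n:ℝ)*Δt)..(((n:ℝ)+1)*Δt),
            (∫ x in Ioc ((j:ℝ)*Δx) (((j:ℝ)+1)*Δx), W x t) := by
      intro j
      have hcled : (j:ℝ)*Δx ≤ ((j:ℝ)+1)*Δx := by
        have : ((j:ℝ)+1) * Δx = (j:ℝ)*Δx + Δx := by ring
        linarith
      have h1 : φavg n j = (1/(Δx*Δt)) *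
          ∫ t in ((n:ℝ)*Δt)..(((n:ℝ)+1)*Δt),
            (∫ x in Ioc ((j:ℝ)*Δx) (((j:ℝ)+1)*Δx), φ x t) := by
        rw [hφavg n j]
        congr 1
        apply intervalIntegral.integral_congr
        intro t _
        dsimp only
        rw [intervalIntegral.integral_of_le hcled]
      have e2 : (∫ t in ((n:ℝ)*Δt)..(((n:ℝ)+1)*Δt),
            (∫ x in Ioc ((j:ℝ)*Δx) (((j:ℝ)+1)*Δx), φ x (t - Δt)))
          = ∫ t in ((n:ℝ)*Δt - Δt)..(((n:ℝ)+1)*Δt - Δt),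
            (∫ x in Ioc ((j:ℝ)*Δx) (((j:ℝ)+1)*Δx), φ x t) :=
        intervalIntegral.integral_comp_sub_right
          (fun t => (∫ x in Ioc ((j:ℝ)*Δx) (((j:ℝ)+1)*Δx), φ x t)) Δt
      have h2 : φavg (n-1) j = (1/(Δx*Δt)) *
          ∫ t in ((n:ℝ)*Δt)..(((n:ℝ)+1)*Δt),
            (∫ x in Ioc ((j:ℝ)*Δx) (((j:ℝ)+1)*Δx), φ x (t - Δt)) := by
        rw [hφavg (n-1) j]
        congr 1
        calc (∫ t in (((n-1:ℕ)):ℝ)*Δt..((((n-1:ℕ)):ℝ)+1)*Δt,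
              ∫ x in (j:ℝ)*Δx..((j:ℝ)+1)*Δx, φ x t)
            = ∫ t in (((n-1:ℕ)):ℝ)*Δt..((((n-1:ℕ)):ℝ)+1)*Δt,
              (∫ x in Ioc ((j:ℝ)*Δx) (((j:ℝ)+1)*Δx), φ x t) := by
              apply intervalIntegral.integral_congr
              intro t _
              dsimp only
              rw [intervalIntegral.integral_of_le hcled]
          _ = ∫ t in ((n:ℝ)*Δt - Δt)..(((n:ℝ)+1)*Δt - Δt),
              (∫ x in Ioc ((j:ℝ)*Δx) (((j:ℝ)+1)*Δx), φ x t) := by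
              rw [show (((n-1:ℕ)):ℝ)*Δt = (n:ℝ)*Δt - Δt from by rw [hcast]; ring]
              rw [show ((((n-1:ℕ)):ℝ)+1)*Δt = ((n:ℝ)+1)*Δt - Δt from by rw [hcast]; ring]
          _ = ∫ t in ((n:ℝ)*Δt)..(((n:ℝ)+1)*Δt),
              (∫ x in Ioc ((j:ℝ)*Δx) (((j:ℝ)+1)*Δx), φ x (t - Δt)) := e2.symm
      have hii1 : IntervalIntegrable
          (fun t => ∫ x in Ioc ((j:ℝ)*Δx) (((j:ℝ)+1)*Δx), φ x t)
          volume ((n:ℝ)*Δt) (((n:ℝ)+1)*Δt) :=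
        aux_param_ii (Φ := fun q : ℝ×ℝ => Function.uncurry φ (q.2, q.1))
          (hψc.comp continuous_swap).stronglyMeasurable
          (fun q => by simpa using hC0 (q.2, q.1)) (hXfin j) _ _
      have hii2 : IntervalIntegrable
          (fun t => ∫ x in Ioc ((j:ℝ)*Δx) (((j:ℝ)+1)*Δx), φ x (t - Δt))
          volume ((n:ℝ)*Δt) (((n:ℝ)+1)*Δt) :=
        aux_param_ii (Φ := fun q : ℝ×ℝ => Function.uncurry φ (q.2, q.1 - Δt))
          (hψc.comp (continuous_snd.prodMk (continuous_fst.sub continuous_const))).stronglyMeasurable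
          (fun q => by simpa using hC0 (q.2, q.1 - Δt)) (hXfin j) _ _
      have e3 : ∀ t, (∫ x in Ioc ((j:ℝ)*Δx) (((j:ℝ)+1)*Δx), φ x t)
          - (∫ x in Ioc ((j:ℝ)*Δx) (((j:ℝ)+1)*Δx), φ x (t - Δt))
          = Δt * ∫ x in Ioc ((j:ℝ)*Δx) (((j:ℝ)+1)*Δx), g x t := by
        intro t
        have hi1 : IntegrableOn (fun x => φ x t) (Ioc ((j:ℝ)*Δx) (((j:ℝ)+1)*Δx)) volume :=
          (hψc.comp (continuous_id.prodMk continuous_const) :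
            Continuous fun x : ℝ => φ x t).integrableOn_Ioc
        have hi2 : IntegrableOn (fun x => φ x (t - Δt))
            (Ioc ((j:ℝ)*Δx) (((j:ℝ)+1)*Δx)) volume :=
          (hψc.comp (continuous_id.prodMk continuous_const) :
            Continuous fun x : ℝ => φ x (t - Δt)).integrableOn_Ioc
        rw [← integral_sub hi1 hi2, ← integral_const_mul]
        apply setIntegral_congr_fun measurableSet_Ioc
        intro x _
        rw [hgdef]
        dsimp only [Function.uncurry]
        field_simp
      have h3 : φavg n j - φavg (n-1) j
          = (1/Δx) * ∫ t in ((n:ℝ)*Δt)..(((n:ℝ)+1)*Δt),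
              (∫ x in Ioc ((j:ℝ)*Δx) (((j:ℝ)+1)*Δx), g x t) := by
        rw [h1, h2, ← mul_sub, ← intervalIntegral.integral_sub hii1 hii2]
        rw [intervalIntegral.integral_congr
          (g := fun t => Δt * ∫ x in Ioc ((j:ℝ)*Δx) (((j:ℝ)+1)*Δx), g x t)
          (fun t _ => e3 t)]
        rw [intervalIntegral.integral_const_mul]
        field_simp
      rw [h3]
      rw [show |ρ n j - k| * ((1/Δx) * ∫ t in ((n:ℝ)*Δt)..(((n:ℝ)+1)*Δt),
            (∫ x in Ioc ((j:ℝ)*Δx) (((j:ℝ)+1)*Δx), g x t)) * Δx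
          = |ρ n j - k| * ∫ t in ((n:ℝ)*Δt)..(((n:ℝ)+1)*Δt),
            (∫ x in Ioc ((j:ℝ)*Δx) (((j:ℝ)+1)*Δx), g x t) from by field_simp]
      rw [← intervalIntegral.integral_const_mul]
      rw [intervalIntegral.integral_of_le haleb, intervalIntegral.integral_of_le haleb]
      apply setIntegral_congr_ae measurableSet_Ioc
      have hbae : ∀ᵐ t : ℝ, t ≠ ((n:ℝ)+1)*Δt := by
        rw [ae_iff]
        simpa using measure_singleton (((n:ℝ)+1)*Δt)
      filter_upwards [hbae] with t htb htmem
      have hta : (n:ℝ)*Δt < t := htmem.1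
      have htb' : t < ((n:ℝ)+1)*Δt := lt_of_le_of_ne htmem.2 htb
      have hfloor : ⌊t/Δt⌋ = (n:ℤ) := by
        rw [Int.floor_eq_iff]
        constructor
        · rw [le_div_iff₀ hΔt]
          push_cast
          linarith
        · rw [div_lt_iff₀ hΔt]
          push_cast
          linarith
      rw [← integral_const_mul]
      apply setIntegral_congr_ae measurableSet_Ioc
      have hdae : ∀ᵐ x : ℝ, x ≠ ((j:ℝ)+1)*Δx := by
        rw [ae_iff]
        simpa using measure_singleton (((j:ℝ)+1)*Δx)
      filter_upwards [hdae] with x hxd hxmem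
      have hxc : (j:ℝ)*Δx < x := hxmem.1
      have hxd' : x < ((j:ℝ)+1)*Δx := lt_of_le_of_ne hxmem.2 hxd
      have hfloorx : ⌊x/Δx⌋ = j := by
        rw [Int.floor_eq_iff]
        constructor
        · rw [le_div_iff₀ hΔx]
          push_cast
          linarith
        · rw [div_lt_iff₀ hΔx]
          push_cast
          linarith
      rw [hWdef]
      dsimp only
      rw [hFdef]
      dsimp only
      rw [hρΔ, hfloor, hfloorx, Int.toNat_natCast]
    calc (∑' j : ℤ, |ρ n j - k| * (φavg n j - φavg (n-1) j) * Δx)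
        = ∑' j : ℤ, ∫ t in ((n:ℝ)*Δt)..(((n:ℝ)+1)*Δt),
            (∫ x in Ioc ((j:ℝ)*Δx) (((j:ℝ)+1)*Δx), W x t) := tsum_congr hterm
      _ = ∑ j ∈ Finset.Icc (-j0) j0, ∫ t in ((n:ℝ)*Δt)..(((n:ℝ)+1)*Δt),
            (∫ x in Ioc ((j:ℝ)*Δx) (((j:ℝ)+1)*Δx), W x t) := by
          apply tsum_eq_sum
          intro j hj
          have hz : ∀ t, (∫ x in Ioc ((j:ℝ)*Δx) (((j:ℝ)+1)*Δx), W x t) = 0 := fun t => by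
            rw [setIntegral_congr_fun (g := fun _ => (0:ℝ)) measurableSet_Ioc
              (fun x hx => hcellW0 j hj t x hx)]
            simp
          simp only [hz]
          simp
      _ = ∫ t in ((n:ℝ)*Δt)..(((n:ℝ)+1)*Δt), (∑ j ∈ Finset.Icc (-j0) j0,
            ∫ x in Ioc ((j:ℝ)*Δx) (((j:ℝ)+1)*Δx), W x t) :=
          (intervalIntegral.integral_finset_sum (fun j _ => hWII j _ _)).symm
      _ = ∫ t in ((n:ℝ)*Δt)..(((n:ℝ)+1)*Δt), Hf t :=
          intervalIntegral.integral_congr (fun t _ => hsumW t)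
  -- rewrite the goal
  have hgoalI : (∫ t in τ..τ', ∫ x, |ρΔ x t - k| * deriv (φ x) t) = ∫ t in τ..τ', hf t := by
    apply intervalIntegral.integral_congr
    intro t _
    rw [hhfdef]
    dsimp only
    have he : (fun x => |ρΔ x t - k| * deriv (φ x) t) = fun x => V x t := by
      funext x
      rw [hd1, hVdef]
    rw [he]
  rw [Finset.sum_congr rfl hSn, hgoalI]
  by_cases hcase : m ≤ p + 1
  · have hempty : Finset.Icc (p+1) (m-1) = ∅ := by
      apply Finset.Icc_eq_empty
      omega
    rw [hempty, Finset.sum_empty, zero_sub, abs_neg]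
    have hmle : (m:ℝ) ≤ (p:ℝ) + 1 := by exact_mod_cast hcase
    have hb := intervalIntegral.norm_integral_le_of_norm_le_const (C := R*N1) (f := hf)
      (a := τ) (b := τ') (fun t _ => by rw [Real.norm_eq_abs]; exact hhfbd t)
    rw [Real.norm_eq_abs] at hb
    have h2 : |τ' - τ| ≤ 2 * Δt := by
      rw [abs_of_nonneg (by linarith)]
      nlinarith
    calc |∫ t in τ..τ', hf t| ≤ R*N1 * |τ' - τ| := hb
      _ ≤ R*N1*(2*Δt) := mul_le_mul_of_nonneg_left h2 (mul_nonneg hR.le hN10)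
      _ ≤ R * (T * N2 + 2 * N1) * Δt := by
          nlinarith [mul_nonneg (mul_nonneg (mul_nonneg hR.le hT.le) hN20) hΔt.le]
  · push_neg at hcase
    have hmcast : (p:ℝ) + 1 ≤ (m:ℝ) := by exact_mod_cast (by omega : p + 1 ≤ m)
    have htel : (∑ n ∈ Finset.Icc (p+1) (m-1),
          ∫ t in ((n:ℝ)*Δt)..(((n:ℝ)+1)*Δt), Hf t)
        = ∫ t in (((p:ℝ)+1)*Δt)..((m:ℝ)*Δt), Hf t := by
      have h1 : Finset.Icc (p+1) (m-1) = Finset.Ico (p+1) m := by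
        rw [← Finset.Ico_add_one_right_eq_Icc]
        congr 1
        omega
      rw [h1, Finset.sum_Ico_eq_sum_range]
      have hadj := intervalIntegral.sum_integral_adjacent_intervals
        (a := fun k => ((p:ℝ)+1+(k:ℝ))*Δt) (n := m - (p+1)) (f := Hf) (μ := volume)
        (fun k _ => hHfII _ _)
      have he : ∀ k ∈ Finset.range (m - (p+1)),
          (∫ t in (((p+1+k:ℕ):ℝ)*Δt)..((((p+1+k:ℕ):ℝ)+1)*Δt), Hf t)
          = ∫ t in (((p:ℝ)+1+((k:ℕ):ℝ))*Δt)..(((p:ℝ)+1+(((k+1:ℕ)):ℝ))*Δt), Hf t := by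
        intro k _
        congr 1
        · push_cast
          ring
        · push_cast
          ring
      rw [Finset.sum_congr rfl he, hadj]
      congr 1
      · push_cast
        ring
      · rw [Nat.cast_sub (by omega : p+1 ≤ m)]
        push_cast
        ring
    rw [htel]
    have hb1b2 : ((p:ℝ)+1)*Δt ≤ (m:ℝ)*Δt := mul_le_mul_of_nonneg_right hmcast hΔt.le
    have hsplit : (∫ t in τ..τ', hf t)
        = (∫ t in τ..(((p:ℝ)+1)*Δt), hf t) + (∫ t in (((p:ℝ)+1)*Δt)..((m:ℝ)*Δt), hf t)
          + (∫ t in ((m:ℝ)*Δt)..τ', hf t) := by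
      rw [intervalIntegral.integral_add_adjacent_intervals (hhfII _ _) (hhfII _ _),
          intervalIntegral.integral_add_adjacent_intervals (hhfII _ _) (hhfII _ _)]
    have hdiffint : (∫ t in (((p:ℝ)+1)*Δt)..((m:ℝ)*Δt), Hf t)
        - (∫ t in (((p:ℝ)+1)*Δt)..((m:ℝ)*Δt), hf t)
        = ∫ t in (((p:ℝ)+1)*Δt)..((m:ℝ)*Δt), (Hf t - hf t) :=
      (intervalIntegral.integral_sub (hHfII _ _) (hhfII _ _)).symm
    have hRN2 : (0:ℝ) ≤ R*(Δt*N2) := mul_nonneg hR.le (mul_nonneg hΔt.le hN20)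
    have hRN1 : (0:ℝ) ≤ R*N1 := mul_nonneg hR.le hN10
    have e1 : |∫ t in (((p:ℝ)+1)*Δt)..((m:ℝ)*Δt), (Hf t - hf t)| ≤ R * (Δt * N2) * T := by
      have hb := intervalIntegral.norm_integral_le_of_norm_le_const (C := R*(Δt*N2))
        (f := fun t => Hf t - hf t) (a := ((p:ℝ)+1)*Δt) (b := (m:ℝ)*Δt)
        (fun t _ => by rw [Real.norm_eq_abs]; exact hHh t)
      rw [Real.norm_eq_abs] at hb
      have hlen : |(m:ℝ)*Δt - ((p:ℝ)+1)*Δt| ≤ T := by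
        rw [abs_of_nonneg (by linarith)]
        have hp0 : (0:ℝ) ≤ ((p:ℝ)+1)*Δt := by positivity
        linarith
      calc |∫ t in (((p:ℝ)+1)*Δt)..((m:ℝ)*Δt), (Hf t - hf t)|
          ≤ R*(Δt*N2) * |(m:ℝ)*Δt - ((p:ℝ)+1)*Δt| := hb
        _ ≤ R*(Δt*N2)*T := mul_le_mul_of_nonneg_left hlen hRN2
    have e2 : |∫ t in τ..(((p:ℝ)+1)*Δt), hf t| ≤ R * N1 * Δt := by
      have hb := intervalIntegral.norm_integral_le_of_norm_le_const (C := R*N1) (f := hf)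
        (a := τ) (b := ((p:ℝ)+1)*Δt) (fun t _ => by rw [Real.norm_eq_abs]; exact hhfbd t)
      rw [Real.norm_eq_abs] at hb
      have hlen : |((p:ℝ)+1)*Δt - τ| ≤ Δt := by
        rw [abs_of_nonneg (by linarith)]
        nlinarith
      calc |∫ t in τ..(((p:ℝ)+1)*Δt), hf t| ≤ R*N1 * |((p:ℝ)+1)*Δt - τ| := hb
        _ ≤ R*N1*Δt := mul_le_mul_of_nonneg_left hlen hRN1
    have e3 : |∫ t in ((m:ℝ)*Δt)..τ', hf t| ≤ R * N1 * Δt := by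
      have hb := intervalIntegral.norm_integral_le_of_norm_le_const (C := R*N1) (f := hf)
        (a := (m:ℝ)*Δt) (b := τ') (fun t _ => by rw [Real.norm_eq_abs]; exact hhfbd t)
      rw [Real.norm_eq_abs] at hb
      have hlen : |τ' - (m:ℝ)*Δt| ≤ Δt := by
        rw [abs_of_nonneg (by linarith)]
        nlinarith
      calc |∫ t in ((m:ℝ)*Δt)..τ', hf t| ≤ R*N1 * |τ' - (m:ℝ)*Δt| := hb
        _ ≤ R*N1*Δt := mul_le_mul_of_nonneg_left hlen hRN1
    have hK : R*(Δt*N2)*T + R*N1*Δt + R*N1*Δt = R * (T * N2 + 2 * N1) * Δt := by ring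
    rw [hsplit, abs_le]
    constructor
    · linarith [abs_le.1 e1, abs_le.1 e2, abs_le.1 e3, hdiffint]
    · linarith [abs_le.1 e1, abs_le.1 e2, abs_le.1 e3, hdiffint]
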